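/- For every n ≥ 1 and every strictly increasing initial vector ρ0 ∈ ℝ^n (ρ0_1 < ρ0_2 < ⋯ < ρ0_n), the map A ↦ S_A is injective on subsets of {1,…,n−1}, and the set of extreme points of the closure of the convex hull of the attainable set A(ρ0, E_P) for the path graph P_n is exactly {S_A : A ⊆ {1,…,n−1}}; in particular this diffusion polytope has exactly 2^{n−1} extreme points. -/

import Mathlib

/-- The averaging operator `B_{ij}` : averages the populations at vertices `i` and `j`,
leaving the other components unchanged. -/
noncomputable def avg {n : ℕ} (i j : Fin n) (ρ : Fin n → ℝ) : Fin n → ℝ :=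
  fun k => if k = i ∨ k = j then (ρ i + ρ j) / 2 else ρ k

/-- The attainable set `A(ρ0, E)`: all vectors obtained from `ρ0` by applying a finite
sequence of operators `B_{ij}` with `{i,j} ∈ E` (and `i ≠ j`). -/
def attainable (n : ℕ) (E : Set (Sym2 (Fin n))) (ρ0 : Fin n → ℝ) : Set (Fin n → ℝ) :=
  {ρ | ∃ L : List (Fin n × Fin n),
    (∀ p ∈ L, p.1 ≠ p.2 ∧ s(p.1, p.2) ∈ E) ∧
    ρ = L.foldl (fun σ p => avg p.1 p.2 σ) ρ0}

/-- The edge set of the path graph `P_n` (0-based: edges `{i, i+1}` for `i+1 < n`). -/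
def pathEdges (n : ℕ) : Set (Sym2 (Fin n)) :=
  {e | ∃ i : ℕ, ∃ h : i + 1 < n, e = s(⟨i, Nat.lt_of_succ_lt h⟩, ⟨i + 1, h⟩)}

/-- Start of the block of index `j` determined by `A` (0-based: `i ∈ A` means indices
`i` and `i+1` lie in the same block): the least `a` with `[a, j) ⊆ A`. -/
def blockStart (A : Finset ℕ) (j : ℕ) : ℕ :=
  Nat.findGreatest (fun a => a ≠ 0 ∧ (a - 1) ∉ A) j

/-- End of the block of index `j` determined by `A`: the greatest `b ≤ n - 1`
with `[j, b) ⊆ A`. -/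
def blockEnd (n : ℕ) (A : Finset ℕ) (j : ℕ) : ℕ :=
  Nat.findGreatest (fun b => ∀ m ∈ Finset.Ico j b, m ∈ A) (n - 1)

/-- The point `S_A`: on each block of consecutive indices determined by `A`, its
components all equal the average of the components of `ρ0` over that block. -/
noncomputable def SA {n : ℕ} (ρ0 : Fin n → ℝ) (A : Finset ℕ) : Fin n → ℝ :=
  fun j =>
    (∑ m ∈ Finset.Icc (blockStart A (j : ℕ)) (blockEnd n A (j : ℕ)),
        if h : m < n then ρ0 ⟨m, h⟩ else 0) /
      ((blockEnd n A (j : ℕ) - blockStart A (j : ℕ) + 1 : ℕ) : ℝ)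

/-- Apply the adjacent averaging operator `B_{p,p+1}` (0-based) if it exists. -/
noncomputable def stepAt (n : ℕ) (p : ℕ) (ρ : Fin n → ℝ) : Fin n → ℝ :=
  if h : p + 1 < n then avg ⟨p, Nat.lt_of_succ_lt h⟩ ⟨p + 1, h⟩ ρ else ρ

namespace DP

variable {n : ℕ}

/-- prefix sum of first `k` coordinates -/
noncomputable def Tp (x : Fin n → ℝ) (k : ℕ) : ℝ :=
  ∑ m ∈ Finset.range k, if h : m < n then x ⟨m, h⟩ else 0

lemma Tp_succ (x : Fin n → ℝ) (k : ℕ) :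
    Tp x (k + 1) = Tp x k + (if h : k < n then x ⟨k, h⟩ else 0) :=
  Finset.sum_range_succ _ k

lemma Tp_zero (x : Fin n → ℝ) : Tp x 0 = 0 := rfl

lemma Tp_stable (x : Fin n → ℝ) {k : ℕ} (hk : n ≤ k) : Tp x k = Tp x n := by
  unfold Tp
  refine (Finset.sum_subset (by simp [Finset.range_subset, hk]; intro m hm; omega) ?_).symm
  intro m _ hm
  simp only [Finset.mem_range, not_lt] at hm
  simp [Nat.not_lt.2 hm]

lemma Tp_coord (x : Fin n → ℝ) {k : ℕ} (h : k < n) :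
    x ⟨k, h⟩ = Tp x (k + 1) - Tp x k := by
  rw [Tp_succ]; simp [h]

lemma Tp_add (x y : Fin n → ℝ) (k : ℕ) : Tp (x + y) k = Tp x k + Tp y k := by
  unfold Tp
  rw [← Finset.sum_add_distrib]
  refine Finset.sum_congr rfl fun m _ => ?_
  by_cases h : m < n <;> simp [h]

lemma Tp_smul (c : ℝ) (x : Fin n → ℝ) (k : ℕ) : Tp (c • x) k = c * Tp x k := by
  unfold Tp
  rw [Finset.mul_sum]
  refine Finset.sum_congr rfl fun m _ => ?_
  by_cases h : m < n <;> simp [h]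

lemma Tp_continuous (k : ℕ) : Continuous fun x : Fin n → ℝ => Tp x k := by
  unfold Tp
  refine continuous_finset_sum _ fun m _ => ?_
  by_cases h : m < n <;> simp [h]
  · exact continuous_apply _
  · exact continuous_const

/-- the polytope -/
def Pset (n : ℕ) (ρ0 : Fin n → ℝ) : Set (Fin n → ℝ) :=
  {x | (∀ i : ℕ, ∀ h : i + 1 < n, x ⟨i, Nat.lt_of_succ_lt h⟩ ≤ x ⟨i + 1, h⟩) ∧
       (∀ k : ℕ, Tp ρ0 k ≤ Tp x k) ∧ Tp x n = Tp ρ0 n}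

lemma mono_of_chain {x : Fin n → ℝ}
    (hx : ∀ i : ℕ, ∀ h : i + 1 < n, x ⟨i, Nat.lt_of_succ_lt h⟩ ≤ x ⟨i + 1, h⟩) :
    Monotone x := by
  have key : ∀ d j : ℕ, ∀ hj : j < n, ∀ hjd : j + d < n, x ⟨j, hj⟩ ≤ x ⟨j + d, hjd⟩ := by
    intro d
    induction d with
    | zero => intro j hj hjd; simp
    | succ d ih =>
      intro j hj hjd
      have h1 : j + d + 1 < n := by omega
      calc x ⟨j, hj⟩ ≤ x ⟨j + d, by omega⟩ := ih j hj (by omega)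
        _ ≤ x ⟨j + d + 1, h1⟩ := hx (j + d) h1
        _ = x ⟨j + (d + 1), hjd⟩ := by congr 1
  intro a b hab
  have h2 : (b : ℕ) = (a : ℕ) + ((b : ℕ) - (a : ℕ)) := by omega
  have h3 := key ((b : ℕ) - (a : ℕ)) a a.isLt (by omega)
  have : (⟨(a : ℕ) + ((b : ℕ) - (a : ℕ)), by omega⟩ : Fin n) = b := Fin.ext (by simpa using h2.symm)
  rwa [this] at h3


lemma avg_apply (p : ℕ) (hp : p + 1 < n) (x : Fin n → ℝ) (m : ℕ) (hm : m < n) :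
    avg ⟨p, Nat.lt_of_succ_lt hp⟩ ⟨p + 1, hp⟩ x ⟨m, hm⟩ =
      if m = p ∨ m = p + 1 then (x ⟨p, Nat.lt_of_succ_lt hp⟩ + x ⟨p + 1, hp⟩) / 2
      else x ⟨m, hm⟩ := by
  unfold avg
  simp [Fin.ext_iff]

lemma avg_Tp (p : ℕ) (hp : p + 1 < n) (x : Fin n → ℝ) (k : ℕ) :
    Tp (avg ⟨p, Nat.lt_of_succ_lt hp⟩ ⟨p + 1, hp⟩ x) k =
      Tp x k + (if k = p + 1 then (x ⟨p + 1, hp⟩ - x ⟨p, Nat.lt_of_succ_lt hp⟩) / 2 else 0) := by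
  set a : Fin n := ⟨p, Nat.lt_of_succ_lt hp⟩
  set b : Fin n := ⟨p + 1, hp⟩
  have hdiff : Tp (avg a b x) k - Tp x k
      = ∑ m ∈ Finset.range k ∩ {p, p + 1},
          ((if h : m < n then avg a b x ⟨m, h⟩ else 0) - (if h : m < n then x ⟨m, h⟩ else 0)) := by
    unfold Tp
    rw [← Finset.sum_sub_distrib]
    refine (Finset.sum_subset Finset.inter_subset_left ?_).symm
    intro m hm hm2
    simp only [Finset.mem_inter, Finset.mem_insert, Finset.mem_singleton] at hm2
    have h1 : m ≠ p ∧ m ≠ p + 1 := by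
      rcases Finset.mem_range.1 hm with _
      constructor <;> (intro h; apply hm2; exact ⟨hm, by omega⟩)
    by_cases h : m < n
    · simp only [h, dif_pos]
      rw [avg_apply p hp x m h]
      simp [h1.1, h1.2]
    · simp [h]
  by_cases hk1 : k ≤ p
  · have : Finset.range k ∩ {p, p + 1} = ∅ := by
      ext m; simp only [Finset.mem_inter, Finset.mem_range, Finset.mem_insert,
        Finset.mem_singleton, Finset.notMem_empty, iff_false]
      rintro ⟨h1, h2 | h2⟩ <;> omega
    rw [this] at hdiff
    simp only [Finset.sum_empty] at hdiff
    have : ¬ (k = p + 1) := by omega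
    rw [if_neg this]
    linarith
  · by_cases hk2 : k = p + 1
    · have : Finset.range k ∩ {p, p + 1} = {p} := by
        ext m; simp only [Finset.mem_inter, Finset.mem_range, Finset.mem_insert,
          Finset.mem_singleton]
        omega
      rw [this, Finset.sum_singleton] at hdiff
      have hpn : p < n := Nat.lt_of_succ_lt hp
      rw [dif_pos hpn, dif_pos hpn, avg_apply p hp x p hpn, if_pos (Or.inl rfl)] at hdiff
      rw [if_pos hk2]
      have : x b = x ⟨p+1, hp⟩ := rfl
      linarith [hdiff]
    · have hk3 : p + 2 ≤ k := by omega
      have : Finset.range k ∩ {p, p + 1} = {p, p + 1} := by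
        ext m; simp only [Finset.mem_inter, Finset.mem_range, Finset.mem_insert,
          Finset.mem_singleton]
        omega
      rw [this, Finset.sum_pair (by omega : p ≠ p + 1)] at hdiff
      have hpn : p < n := Nat.lt_of_succ_lt hp
      rw [dif_pos hpn, dif_pos hpn, dif_pos hp, dif_pos hp, avg_apply p hp x p hpn,
        avg_apply p hp x (p+1) hp, if_pos (Or.inl rfl), if_pos (Or.inr rfl)] at hdiff
      rw [if_neg hk2]
      linarith [hdiff]

lemma avg_mem_Pset {ρ0 : Fin n → ℝ} {x : Fin n → ℝ} (hx : x ∈ Pset n ρ0)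
    (p : ℕ) (hp : p + 1 < n) :
    avg ⟨p, Nat.lt_of_succ_lt hp⟩ ⟨p + 1, hp⟩ x ∈ Pset n ρ0 := by
  obtain ⟨h1, h2, h3⟩ := hx
  have hgap := h1 p hp
  refine ⟨?_, ?_, ?_⟩
  · intro i hi
    rw [avg_apply p hp x i (by omega), avg_apply p hp x (i+1) hi]
    by_cases e1 : i = p ∨ i = p + 1 <;> by_cases e2 : i + 1 = p ∨ i + 1 = p + 1
    · rw [if_pos e1, if_pos e2]
    · rw [if_pos e1, if_neg e2]
      have : i = p + 1 := by omega
      subst this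
      have := h1 (p+1) hi
      linarith
    · rw [if_neg e1, if_pos e2]
      have : i + 1 = p := by omega
      have hle := h1 i hi
      have : (⟨i+1, hi⟩ : Fin n) = ⟨p, Nat.lt_of_succ_lt hp⟩ := Fin.ext (by simpa using this)
      rw [this] at hle
      linarith
    · rw [if_neg e1, if_neg e2]
      exact h1 i hi
  · intro k
    rw [avg_Tp p hp x k]
    by_cases hk : k = p + 1
    · rw [if_pos hk]; have := h2 k; linarith
    · rw [if_neg hk]; have := h2 k; linarith
  · rw [avg_Tp p hp x n]
    have : ¬ (n = p + 1) := by omega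
    rw [if_neg this]
    linarith

lemma rho0_mem_attainable (E : Set (Sym2 (Fin n))) (ρ0 : Fin n → ℝ) :
    ρ0 ∈ attainable n E ρ0 := ⟨[], by simp, rfl⟩

lemma attainable_step {E : Set (Sym2 (Fin n))} {ρ0 x : Fin n → ℝ}
    (hx : x ∈ attainable n E ρ0) {i j : Fin n} (hij : i ≠ j) (he : s(i, j) ∈ E) :
    avg i j x ∈ attainable n E ρ0 := by
  obtain ⟨L, hL, hfold⟩ := hx
  refine ⟨L ++ [(i, j)], ?_, ?_⟩
  · intro q hq
    rcases List.mem_append.1 hq with h | h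
    · exact hL q h
    · simp at h; subst h; exact ⟨hij, he⟩
  · rw [List.foldl_append, ← hfold]
    rfl

lemma avg_comm (i j : Fin n) (x : Fin n → ℝ) : avg i j x = avg j i x := by
  funext k
  unfold avg
  simp only [or_comm (a := k = i), add_comm (x i) (x j)]

lemma rho0_mem_Pset {ρ0 : Fin n → ℝ} (hρ0 : Monotone ρ0) : ρ0 ∈ Pset n ρ0 :=
  ⟨fun i h => hρ0 (by simp [Fin.le_def]), fun _ => le_refl _, rfl⟩

lemma foldl_mem_Pset {ρ0 : Fin n → ℝ} (L : List (Fin n × Fin n))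
    (hL : ∀ p ∈ L, p.1 ≠ p.2 ∧ s(p.1, p.2) ∈ pathEdges n) {σ : Fin n → ℝ}
    (hσ : σ ∈ Pset n ρ0) :
    L.foldl (fun σ p => avg p.1 p.2 σ) σ ∈ Pset n ρ0 := by
  induction L generalizing σ with
  | nil => exact hσ
  | cons q L ih =>
    simp only [List.foldl_cons]
    refine ih (fun p hp => hL p (List.mem_cons_of_mem q hp)) ?_
    obtain ⟨-, i, hi, he⟩ := hL q List.mem_cons_self
    rcases Sym2.eq_iff.1 he with ⟨h1, h2⟩ | ⟨h1, h2⟩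
    · rw [h1, h2]; exact avg_mem_Pset hσ i hi
    · rw [h1, h2, avg_comm]; exact avg_mem_Pset hσ i hi

lemma attainable_subset_Pset {ρ0 : Fin n → ℝ} (hρ0 : Monotone ρ0) :
    attainable n (pathEdges n) ρ0 ⊆ Pset n ρ0 := by
  rintro x ⟨L, hL, rfl⟩
  exact foldl_mem_Pset L hL (rho0_mem_Pset hρ0)

lemma Pset_closed (ρ0 : Fin n → ℝ) : IsClosed (Pset n ρ0) := by
  have h1 : IsClosed {x : Fin n → ℝ |
      ∀ i : ℕ, ∀ h : i + 1 < n, x ⟨i, Nat.lt_of_succ_lt h⟩ ≤ x ⟨i + 1, h⟩} := by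
    have : {x : Fin n → ℝ | ∀ i : ℕ, ∀ h : i + 1 < n, x ⟨i, Nat.lt_of_succ_lt h⟩ ≤ x ⟨i + 1, h⟩}
        = ⋂ i : ℕ, {x : Fin n → ℝ | ∀ h : i + 1 < n, x ⟨i, Nat.lt_of_succ_lt h⟩ ≤ x ⟨i + 1, h⟩} := by
      ext x; simp [Set.mem_iInter]
    rw [this]
    refine isClosed_iInter fun i => ?_
    by_cases h : i + 1 < n
    · have : {x : Fin n → ℝ | ∀ h : i + 1 < n, x ⟨i, Nat.lt_of_succ_lt h⟩ ≤ x ⟨i + 1, h⟩}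
          = {x : Fin n → ℝ | x ⟨i, Nat.lt_of_succ_lt h⟩ ≤ x ⟨i + 1, h⟩} := by
        ext x; simp [h]
      rw [this]
      exact isClosed_le (continuous_apply _) (continuous_apply _)
    · have : {x : Fin n → ℝ | ∀ h : i + 1 < n, x ⟨i, Nat.lt_of_succ_lt h⟩ ≤ x ⟨i + 1, h⟩}
          = Set.univ := by
        ext x; simp [h]
      rw [this]; exact isClosed_univ
  have h2 : IsClosed {x : Fin n → ℝ | ∀ k : ℕ, Tp ρ0 k ≤ Tp x k} := by
    have : {x : Fin n → ℝ | ∀ k : ℕ, Tp ρ0 k ≤ Tp x k}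
        = ⋂ k : ℕ, {x : Fin n → ℝ | Tp ρ0 k ≤ Tp x k} := by ext x; simp [Set.mem_iInter]
    rw [this]
    exact isClosed_iInter fun k => isClosed_le continuous_const (Tp_continuous k)
  have h3 : IsClosed {x : Fin n → ℝ | Tp x n = Tp ρ0 n} :=
    isClosed_eq (Tp_continuous n) continuous_const
  have : Pset n ρ0 = {x : Fin n → ℝ |
      ∀ i : ℕ, ∀ h : i + 1 < n, x ⟨i, Nat.lt_of_succ_lt h⟩ ≤ x ⟨i + 1, h⟩} ∩
      ({x : Fin n → ℝ | ∀ k : ℕ, Tp ρ0 k ≤ Tp x k} ∩ {x : Fin n → ℝ | Tp x n = Tp ρ0 n}) := by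
    ext x
    simp only [Pset, Set.mem_setOf_eq, Set.mem_inter_iff, and_assoc]
  rw [this]
  exact h1.inter (h2.inter h3)

lemma Pset_convex (ρ0 : Fin n → ℝ) : Convex ℝ (Pset n ρ0) := by
  rintro x ⟨hx1, hx2, hx3⟩ y ⟨hy1, hy2, hy3⟩ a b ha hb hab
  have hT : ∀ k, Tp (a • x + b • y) k = a * Tp x k + b * Tp y k := by
    intro k; rw [Tp_add, Tp_smul, Tp_smul]
  refine ⟨?_, ?_, ?_⟩
  · intro i h
    have hh1 := hx1 i h
    have hh2 := hy1 i h
    simp only [Pi.add_apply, Pi.smul_apply, smul_eq_mul]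
    nlinarith [mul_le_mul_of_nonneg_left hh1 ha, mul_le_mul_of_nonneg_left hh2 hb]
  · intro k
    rw [hT k]
    have h1 := mul_le_mul_of_nonneg_left (hx2 k) ha
    have h2 := mul_le_mul_of_nonneg_left (hy2 k) hb
    have h0 : Tp ρ0 k = a * Tp ρ0 k + b * Tp ρ0 k := by
      linear_combination (-(Tp ρ0 k)) * hab
    linarith
  · rw [hT n, hx3, hy3]
    linear_combination (Tp ρ0 n) * hab

lemma Pset_coord_bounds (hn : 1 ≤ n) (ρ0 : Fin n → ℝ) {x : Fin n → ℝ} (hx : x ∈ Pset n ρ0)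
    (j : Fin n) : ρ0 ⟨0, hn⟩ ≤ x j ∧ x j ≤ ρ0 ⟨n - 1, by omega⟩ := by
  obtain ⟨h1, h2, h3⟩ := hx
  have hmono := mono_of_chain h1
  have hlow : ρ0 ⟨0, hn⟩ ≤ x ⟨0, hn⟩ := by
    have h0 : 0 < n := by omega
    have := h2 1
    rw [Tp_succ, Tp_succ] at this
    simpa [Tp, h0] using this
  have hhigh : x ⟨n - 1, by omega⟩ ≤ ρ0 ⟨n - 1, by omega⟩ := by
    have hsub : n = (n - 1) + 1 := by omega
    have hlt : n - 1 < n := by omega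
    have e1 : Tp x n = Tp x (n-1) + x ⟨n-1, hlt⟩ := by
      have ee : Tp x n = Tp x (n-1+1) := by rw [← hsub]
      rw [ee, Tp_succ, dif_pos hlt]
    have e2 : Tp ρ0 n = Tp ρ0 (n-1) + ρ0 ⟨n-1, hlt⟩ := by
      have ee : Tp ρ0 n = Tp ρ0 (n-1+1) := by rw [← hsub]
      rw [ee, Tp_succ, dif_pos hlt]
    have := h2 (n-1)
    rw [e1, e2] at h3
    linarith
  constructor
  · exact le_trans hlow (hmono (by simp [Fin.le_def]))
  · exact le_trans (hmono (by simp [Fin.le_def]; omega)) hhigh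

lemma Pset_compact (hn : 1 ≤ n) (ρ0 : Fin n → ℝ) : IsCompact (Pset n ρ0) := by
  rw [Metric.isCompact_iff_isClosed_bounded]
  refine ⟨Pset_closed ρ0, ?_⟩
  rw [Metric.isBounded_iff_subset_closedBall 0]
  refine ⟨max |ρ0 ⟨0, hn⟩| |ρ0 ⟨n - 1, by omega⟩|, fun x hx => ?_⟩
  rw [Metric.mem_closedBall, dist_zero_right]
  rw [pi_norm_le_iff_of_nonneg (le_trans (abs_nonneg _) (le_max_left _ _))]
  intro j
  obtain ⟨hl, hr⟩ := Pset_coord_bounds hn ρ0 hx j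
  rw [Real.norm_eq_abs, abs_le]
  constructor
  · have : -(max |ρ0 ⟨0, hn⟩| |ρ0 ⟨n - 1, by omega⟩|) ≤ -|ρ0 ⟨0, hn⟩| := by
      simp [le_max_left]
    have h2 : -|ρ0 ⟨0, hn⟩| ≤ ρ0 ⟨0, hn⟩ := neg_abs_le _
    linarith
  · have h2 : ρ0 ⟨n-1, by omega⟩ ≤ |ρ0 ⟨n-1, by omega⟩| := le_abs_self _
    have : |ρ0 ⟨n-1, by omega⟩| ≤ max |ρ0 ⟨0, hn⟩| |ρ0 ⟨n - 1, by omega⟩| := le_max_right _ _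
    linarith

lemma tight_not_both {ρ0 : Fin n → ℝ} (hρ0 : StrictMono ρ0) {x : Fin n → ℝ}
    (hx : x ∈ Pset n ρ0) {i : ℕ} (hi : i + 1 < n)
    (he : x ⟨i, Nat.lt_of_succ_lt hi⟩ = x ⟨i + 1, hi⟩)
    (ht : Tp x (i + 1) = Tp ρ0 (i + 1)) : False := by
  obtain ⟨h1, h2, h3⟩ := hx
  have hin : i < n := Nat.lt_of_succ_lt hi
  have c1 : x ⟨i, hin⟩ = Tp x (i+1) - Tp x i := Tp_coord x hin
  have c2 : ρ0 ⟨i, hin⟩ = Tp ρ0 (i+1) - Tp ρ0 i := Tp_coord ρ0 hin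
  have hxi : x ⟨i, hin⟩ ≤ ρ0 ⟨i, hin⟩ := by
    have := h2 i
    rw [c1, c2, ht]
    linarith
  have hstrict : ρ0 ⟨i, hin⟩ < ρ0 ⟨i+1, hi⟩ := hρ0 (by simp [Fin.lt_def])
  have key : Tp x (i+2) < Tp ρ0 (i+2) := by
    have e1 : Tp x (i+2) = Tp x (i+1) + x ⟨i+1, hi⟩ := by rw [Tp_succ, dif_pos hi]
    have e2 : Tp ρ0 (i+2) = Tp ρ0 (i+1) + ρ0 ⟨i+1, hi⟩ := by rw [Tp_succ, dif_pos hi]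
    rw [e1, e2, ht, ← he]
    linarith
  exact absurd (h2 (i+2)) (by linarith)

open Finset in
lemma eq_SA_of_pattern (hn : 1 ≤ n) {ρ0 : Fin n → ℝ} {A : Finset ℕ} {x : Fin n → ℝ}
    (h1 : ∀ i : ℕ, ∀ h : i + 1 < n, i ∈ A → x ⟨i, Nat.lt_of_succ_lt h⟩ = x ⟨i + 1, h⟩)
    (h2 : ∀ k : ℕ, 1 ≤ k → k ≤ n - 1 → (k - 1) ∉ A → Tp x k = Tp ρ0 k)
    (h3 : Tp x n = Tp ρ0 n) :
    x = SA ρ0 A := by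
  classical
  funext j
  set s := blockStart A (j : ℕ) with hs_def
  set e := blockEnd n A (j : ℕ) with he_def
  have hjn : (j : ℕ) < n := j.isLt
  have hjn1 : (j : ℕ) ≤ n - 1 := by omega
  -- properties of s
  have hsiff := (Nat.findGreatest_eq_iff (m := s)
    (P := fun a => a ≠ 0 ∧ (a - 1) ∉ A) (k := (j : ℕ))).1 hs_def.symm
  obtain ⟨hs_le, hs_prop, hs_max⟩ := hsiff
  have hs_mem : ∀ m : ℕ, s ≤ m → m < (j : ℕ) → m ∈ A := by
    intro m hm1 hm2
    by_contra hmA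
    exact (hs_max (n := m + 1) (by omega) (by omega)) ⟨by omega, by simpa using hmA⟩
  -- properties of e
  have heiff := (Nat.findGreatest_eq_iff (m := e)
    (P := fun b => ∀ m ∈ Finset.Ico (j : ℕ) b, m ∈ A) (k := n - 1)).1 he_def.symm
  obtain ⟨he_le, he_prop', he_max⟩ := heiff
  have hj_le_e : (j : ℕ) ≤ e := by
    rw [he_def]
    exact Nat.le_findGreatest hjn1 (by simp)
  have he_prop : ∀ m ∈ Finset.Ico (j : ℕ) e, m ∈ A := by
    rcases Nat.eq_zero_or_pos e with h | h
    · intro m hm; rw [h] at hm; simp only [Finset.mem_Ico] at hm; omega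
    · exact he_prop' (by omega)
  have he_end : e = n - 1 ∨ e ∉ A := by
    by_cases h : e = n - 1
    · exact Or.inl h
    · right
      intro heA
      refine he_max (n := e + 1) (by omega) (by omega) ?_
      intro m hm
      simp only [Finset.mem_Ico] at hm
      rcases Nat.lt_or_ge m e with h' | h'
      · exact he_prop m (Finset.mem_Ico.2 ⟨hm.1, h'⟩)
      · have : m = e := by omega
        rwa [this]
  have hse : s ≤ e := le_trans hs_le hj_le_e
  have hen : e < n := by omega
  -- x is constant on the block
  have hconst : ∀ m : ℕ, s ≤ m → m ≤ e → ∀ hm : m < n, x ⟨m, hm⟩ = x ⟨s, by omega⟩ := by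
    intro m hm1
    induction m, hm1 using Nat.le_induction with
    | base => intro _ _; rfl
    | succ m hsm ih =>
      intro hme hm
      have hmn : m + 1 < n := by omega
      have hmA : m ∈ A := by
        rcases Nat.lt_or_ge m (j : ℕ) with h | h
        · exact hs_mem m hsm h
        · exact he_prop m (Finset.mem_Ico.2 ⟨h, by omega⟩)
      rw [← h1 m hmn hmA]
      exact ih (by omega) (by omega)
  have hxj : x j = x ⟨s, by omega⟩ := by
    have := hconst (j : ℕ) hs_le hj_le_e hjn
    simpa using this
  -- tightness at s and e+1
  have hts : Tp x s = Tp ρ0 s := by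
    rcases Nat.eq_zero_or_pos s with h | h
    · rw [h]; rfl
    · have hs1 : s ≤ n - 1 := le_trans hs_le hjn1
      exact h2 s h hs1 (hs_prop (Nat.pos_iff_ne_zero.mp h)).2
  have hte : Tp x (e + 1) = Tp ρ0 (e + 1) := by
    by_cases hcase : e + 1 = n
    · rw [hcase]; exact h3
    · have hlt : e + 1 ≤ n - 1 := by omega
      have heA : e ∉ A := by
        rcases he_end with h | h
        · exact absurd (by omega : e + 1 = n) hcase
        · exact h
      exact h2 (e + 1) (by omega) hlt (by simpa using heA)
  -- sum over the block
  have key : ∀ y : Fin n → ℝ, Tp y (e + 1) - Tp y s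
      = ∑ m ∈ Finset.Icc s e, (if h : m < n then y ⟨m, h⟩ else 0) := by
    intro y
    have := Finset.sum_range_add_sum_Ico (fun m => if h : m < n then y ⟨m, h⟩ else 0)
      (by omega : s ≤ e + 1)
    rw [Finset.Ico_add_one_right_eq_Icc] at this
    unfold Tp
    linarith [this]
  have hxsum : ∑ m ∈ Finset.Icc s e, (if h : m < n then x ⟨m, h⟩ else 0)
      = ((e - s + 1 : ℕ) : ℝ) * x j := by
    rw [Finset.sum_congr rfl (fun m hm => ?_)]
    · rw [Finset.sum_const, Nat.card_Icc]
      have : e + 1 - s = e - s + 1 := by omega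
      rw [this, nsmul_eq_mul]
    · simp only [Finset.mem_Icc] at hm
      have hmn : m < n := by omega
      rw [dif_pos hmn, hconst m hm.1 hm.2 hmn, hxj]
  have final : ((e - s + 1 : ℕ) : ℝ) * x j
      = ∑ m ∈ Finset.Icc s e, (if h : m < n then ρ0 ⟨m, h⟩ else 0) := by
    rw [← hxsum, ← key x, ← key ρ0, hts, hte]
  have hcard : ((e - s + 1 : ℕ) : ℝ) ≠ 0 := by
    positivity
  have hSA : SA ρ0 A j = (∑ m ∈ Finset.Icc s e, (if h : m < n then ρ0 ⟨m, h⟩ else 0))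
      / ((e - s + 1 : ℕ) : ℝ) := rfl
  rw [hSA, ← final, mul_div_cancel_left₀ _ hcard]

/-- `avg i j` as a linear map. -/
noncomputable def avgL (i j : Fin n) : (Fin n → ℝ) →ₗ[ℝ] (Fin n → ℝ) where
  toFun := avg i j
  map_add' x y := by
    funext k
    unfold avg
    by_cases h : k = i ∨ k = j <;> simp [h] <;> ring
  map_smul' c x := by
    funext k
    unfold avg
    by_cases h : k = i ∨ k = j <;> simp [h] <;> ring

lemma avg_mem_K {ρ0 : Fin n → ℝ} {x : Fin n → ℝ}
    (hx : x ∈ closure (convexHull ℝ (attainable n (pathEdges n) ρ0)))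
    (p : ℕ) (hp : p + 1 < n) :
    avg ⟨p, Nat.lt_of_succ_lt hp⟩ ⟨p + 1, hp⟩ x
      ∈ closure (convexHull ℝ (attainable n (pathEdges n) ρ0)) := by
  set i : Fin n := ⟨p, Nat.lt_of_succ_lt hp⟩
  set j : Fin n := ⟨p + 1, hp⟩
  have hij : i ≠ j := by simp [i, j, Fin.ext_iff]
  have hedge : s(i, j) ∈ pathEdges n := ⟨p, hp, rfl⟩
  set S := attainable n (pathEdges n) ρ0
  have h1 : avg i j '' S ⊆ S := by
    rintro y ⟨z, hz, rfl⟩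
    exact attainable_step hz hij hedge
  have h2 : avg i j '' convexHull ℝ S ⊆ convexHull ℝ S := by
    have := (avgL i j).image_convexHull S
    have heq : ⇑(avgL i j) = avg i j := rfl
    rw [heq] at this
    rw [this]
    exact convexHull_mono h1
  have hcont : Continuous (avg i j) := by
    have := (avgL i j).continuous_of_finiteDimensional
    exact this
  have h3 := image_closure_subset_closure_image (s := convexHull ℝ S) hcont
  have h4 : avg i j x ∈ closure (avg i j '' convexHull ℝ S) := h3 ⟨x, hx, rfl⟩
  exact closure_mono h2 h4

lemma K_subset_Pset {ρ0 : Fin n → ℝ} (hρ0 : Monotone ρ0) :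
    closure (convexHull ℝ (attainable n (pathEdges n) ρ0)) ⊆ Pset n ρ0 :=
  closure_minimal (convexHull_min (attainable_subset_Pset hρ0) (Pset_convex ρ0))
    (Pset_closed ρ0)

lemma K_compact (hn : 1 ≤ n) {ρ0 : Fin n → ℝ} (hρ0 : Monotone ρ0) :
    IsCompact (closure (convexHull ℝ (attainable n (pathEdges n) ρ0))) :=
  (Pset_compact hn ρ0).of_isClosed_subset isClosed_closure (K_subset_Pset hρ0)

lemma rho0_mem_K (ρ0 : Fin n → ℝ) :
    ρ0 ∈ closure (convexHull ℝ (attainable n (pathEdges n) ρ0)) :=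
  subset_closure (subset_convexHull ℝ _ (rho0_mem_attainable _ ρ0))

open Finset in
lemma SA_mem_K (hn : 1 ≤ n) {ρ0 : Fin n → ℝ} (hρ0 : StrictMono ρ0) {A : Finset ℕ}
    (hA : A ⊆ Finset.range (n - 1)) :
    SA ρ0 A ∈ closure (convexHull ℝ (attainable n (pathEdges n) ρ0)) ∧
    (∀ k : ℕ, 1 ≤ k → k ≤ n - 1 → (k - 1) ∉ A → Tp (SA ρ0 A) k = Tp ρ0 k) ∧
    (∀ i : ℕ, ∀ h : i + 1 < n, i ∈ A →
      SA ρ0 A ⟨i, Nat.lt_of_succ_lt h⟩ = SA ρ0 A ⟨i + 1, h⟩) := by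
  classical
  set K := closure (convexHull ℝ (attainable n (pathEdges n) ρ0)) with hK
  set C := K ∩ {x : Fin n → ℝ | ∀ k : ℕ, 1 ≤ k → k ≤ n - 1 → (k - 1) ∉ A → Tp x k = Tp ρ0 k}
    with hC
  have hCclosed : IsClosed {x : Fin n → ℝ |
      ∀ k : ℕ, 1 ≤ k → k ≤ n - 1 → (k - 1) ∉ A → Tp x k = Tp ρ0 k} := by
    have : {x : Fin n → ℝ | ∀ k : ℕ, 1 ≤ k → k ≤ n - 1 → (k - 1) ∉ A → Tp x k = Tp ρ0 k}
        = ⋂ k : ℕ, {x : Fin n → ℝ | 1 ≤ k → k ≤ n - 1 → (k - 1) ∉ A → Tp x k = Tp ρ0 k} := by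
      ext x; simp [Set.mem_iInter]
    rw [this]
    refine isClosed_iInter fun k => ?_
    by_cases hk : 1 ≤ k ∧ k ≤ n - 1 ∧ (k - 1) ∉ A
    · have : {x : Fin n → ℝ | 1 ≤ k → k ≤ n - 1 → (k - 1) ∉ A → Tp x k = Tp ρ0 k}
          = {x : Fin n → ℝ | Tp x k = Tp ρ0 k} := by
        ext x; simp [hk.1, hk.2.1, hk.2.2]
      rw [this]
      exact isClosed_eq (Tp_continuous k) continuous_const
    · have : {x : Fin n → ℝ | 1 ≤ k → k ≤ n - 1 → (k - 1) ∉ A → Tp x k = Tp ρ0 k}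
          = Set.univ := by
        ext x
        simp only [Set.mem_setOf_eq, Set.mem_univ, iff_true]
        intro hk1 hk2 hk3
        exact absurd ⟨hk1, hk2, hk3⟩ hk
      rw [this]; exact isClosed_univ
  have hCcompact : IsCompact C := (K_compact hn hρ0.monotone).of_isClosed_subset
    (isClosed_closure.inter hCclosed) Set.inter_subset_left
  have hCne : C.Nonempty := ⟨ρ0, rho0_mem_K ρ0, fun k _ _ _ => rfl⟩
  have hΦcont : Continuous fun x : Fin n → ℝ => ∑ j : Fin n, (x j) ^ 2 := by
    refine continuous_finset_sum _ fun j _ => ?_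
    exact (continuous_apply j).pow 2
  obtain ⟨z, hzC, hzmin⟩ := hCcompact.exists_isMinOn hCne hΦcont.continuousOn
  -- z has equal coordinates along A
  have hzeq : ∀ p : ℕ, ∀ hp : p + 1 < n, p ∈ A →
      z ⟨p, Nat.lt_of_succ_lt hp⟩ = z ⟨p + 1, hp⟩ := by
    intro p hp hpA
    set a : Fin n := ⟨p, Nat.lt_of_succ_lt hp⟩
    set b : Fin n := ⟨p + 1, hp⟩
    have hab : a ≠ b := by simp [a, b, Fin.ext_iff]
    have hz' : avg a b z ∈ C := by
      refine ⟨avg_mem_K hzC.1 p hp, fun k hk1 hk2 hk3 => ?_⟩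
      rw [avg_Tp p hp z k]
      have : ¬ (k = p + 1) := by
        intro h; apply hk3; rw [h]; simpa using hpA
      rw [if_neg this, add_zero]
      exact hzC.2 k hk1 hk2 hk3
    have hmin := hzmin hz'
    -- compute the sum identity
    have hdecomp : ∀ y : Fin n → ℝ, ∑ j : Fin n, (y j) ^ 2
        = (y a) ^ 2 + ((y b) ^ 2 + ∑ j ∈ (Finset.univ.erase a).erase b, (y j) ^ 2) := by
      intro y
      rw [← Finset.add_sum_erase Finset.univ (fun j => y j ^ 2) (Finset.mem_univ a),
        ← Finset.add_sum_erase _ (fun j => y j ^ 2)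
          (Finset.mem_erase.2 ⟨Ne.symm hab, Finset.mem_univ b⟩)]
    have hoff : ∀ j ∈ (Finset.univ.erase a).erase b, avg a b z j = z j := by
      intro j hj
      have hj' := Finset.mem_erase.1 hj
      have hjb := hj'.1
      have hja := (Finset.mem_erase.1 hj'.2).1
      unfold avg
      rw [if_neg]
      rintro (h | h)
      · exact hja h
      · exact hjb h
    have hΦavg : ∑ j : Fin n, (avg a b z j) ^ 2
        = ∑ j : Fin n, (z j) ^ 2 - (z a - z b) ^ 2 / 2 := by
      have hsum_off : ∑ j ∈ (Finset.univ.erase a).erase b, (avg a b z j) ^ 2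
          = ∑ j ∈ (Finset.univ.erase a).erase b, (z j) ^ 2 :=
        Finset.sum_congr rfl (fun j hj => by rw [hoff j hj])
      rw [hdecomp (avg a b z), hdecomp z, hsum_off]
      have h1 : avg a b z a = (z a + z b) / 2 := by unfold avg; rw [if_pos (Or.inl rfl)]
      have h2 : avg a b z b = (z a + z b) / 2 := by unfold avg; rw [if_pos (Or.inr rfl)]
      rw [h1, h2]
      ring
    have : (z a - z b) ^ 2 / 2 ≤ 0 := by
      have h := hmin
      simp only [Set.mem_setOf_eq] at h
      rw [hΦavg] at h
      linarith
    have : (z a - z b) ^ 2 ≤ 0 := by linarith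
    have : z a - z b = 0 := by nlinarith [sq_nonneg (z a - z b)]
    linarith [this]
  have hzP : z ∈ Pset n ρ0 := K_subset_Pset hρ0.monotone hzC.1
  have hzSA : z = SA ρ0 A := eq_SA_of_pattern hn hzeq hzC.2 hzP.2.2
  rw [← hzSA]
  exact ⟨hzC.1, hzC.2, hzeq⟩

open Filter Topology in
lemma not_extreme_of_slack {ρ0 : Fin n → ℝ} (hρ0 : StrictMono ρ0) {x : Fin n → ℝ}
    (hx : x ∈ Pset n ρ0) {i0 : ℕ} (hi0 : i0 + 1 < n)
    (hs1 : x ⟨i0, Nat.lt_of_succ_lt hi0⟩ < x ⟨i0 + 1, hi0⟩)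
    (hs2 : Tp ρ0 (i0 + 1) < Tp x (i0 + 1)) :
    x ∉ Set.extremePoints ℝ (Pset n ρ0) := by
  classical
  set k0 : ℕ := i0 + 1 with hk0_def
  have hk0n : k0 < n := hi0
  have hk01 : 1 ≤ k0 := by omega
  -- coordinate extension
  set xq : ℕ → ℝ := fun m => if h : m < n then x ⟨m, h⟩ else 0 with hxq
  have hxq_eq : ∀ m (h : m < n), xq m = x ⟨m, h⟩ := fun m h => dif_pos h
  -- the left foot
  set u : ℕ := Nat.findGreatest (fun k => k = 0 ∨ xq (k - 1) ≠ xq k) (k0 - 1) with hu_def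
  have huiff := (Nat.findGreatest_eq_iff (m := u)
    (P := fun k => k = 0 ∨ xq (k - 1) ≠ xq k) (k := k0 - 1)).1 hu_def.symm
  obtain ⟨hu_le, hu_prop, hu_max⟩ := huiff
  have hu_lt : u < k0 := by omega
  have hu_eq : ∀ k, u < k → k < k0 → xq (k - 1) = xq k := by
    intro k h1 h2
    by_contra hne
    exact hu_max (n := k) h1 (by omega) (Or.inr hne)
  -- the right foot
  have hv_ex : ∃ k, k0 < k ∧ (k = n ∨ xq (k - 1) ≠ xq k) := ⟨n, hk0n, Or.inl rfl⟩
  set v : ℕ := Nat.find hv_ex with hv_def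
  obtain ⟨hv_gt, hv_prop⟩ := Nat.find_spec hv_ex
  rw [← hv_def] at hv_gt hv_prop
  have hv_le : v ≤ n := Nat.find_le ⟨hk0n, Or.inl rfl⟩
  have hv_eq : ∀ k, k0 < k → k < v → xq (k - 1) = xq k := by
    intro k h1 h2
    have := Nat.find_min hv_ex h2
    push_neg at this
    exact (this h1).2
  -- slack at all interior points
  have hslack : ∀ k, u < k → k < v → Tp ρ0 k < Tp x k := by
    intro k h1 h2
    have hk1 : 1 ≤ k := by omega
    have hkn : k < n := by omega
    rcases lt_trichotomy k k0 with h | h | h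
    · obtain ⟨i, rfl⟩ : ∃ i, k = i + 1 := ⟨k - 1, by omega⟩
      have heq : x ⟨i, Nat.lt_of_succ_lt hkn⟩ = x ⟨i + 1, hkn⟩ := by
        have := hu_eq (i + 1) h1 h
        rwa [Nat.add_sub_cancel, hxq_eq i (by omega), hxq_eq (i + 1) hkn] at this
      rcases lt_or_eq_of_le (hx.2.1 (i + 1)) with h' | h'
      · exact h'
      · exact absurd (tight_not_both hρ0 hx hkn heq h'.symm) not_false
    · rw [h]; exact hs2
    · obtain ⟨i, rfl⟩ : ∃ i, k = i + 1 := ⟨k - 1, by omega⟩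
      have heq : x ⟨i, Nat.lt_of_succ_lt hkn⟩ = x ⟨i + 1, hkn⟩ := by
        have := hv_eq (i + 1) h h2
        rwa [Nat.add_sub_cancel, hxq_eq i (by omega), hxq_eq (i + 1) hkn] at this
      rcases lt_or_eq_of_le (hx.2.1 (i + 1)) with h' | h'
      · exact h'
      · exact absurd (tight_not_both hρ0 hx hkn heq h'.symm) not_false
  -- the tent profile
  set D : ℕ → ℝ := fun k =>
    if k ≤ u then 0
    else if k ≤ k0 then ((k : ℝ) - u) * ((v : ℝ) - k0)
    else if k < v then ((v : ℝ) - k) * ((k0 : ℝ) - u)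
    else 0 with hD_def
  have hD0 : ∀ k, k ≤ u → D k = 0 := fun k h => if_pos h
  have hDv : ∀ k, v ≤ k → D k = 0 := by
    intro k h
    have h1 : ¬ k ≤ u := by omega
    have h2 : ¬ k ≤ k0 := by omega
    have h3 : ¬ k < v := by omega
    simp only [hD_def, if_neg h1, if_neg h2, if_neg h3]
  have hD1 : ∀ k, u ≤ k → k ≤ k0 → D k = ((k : ℝ) - u) * ((v : ℝ) - k0) := by
    intro k h1 h2
    by_cases h : k ≤ u
    · have hku : k = u := by omega
      rw [hD0 k h, hku]
      simp
    · simp only [hD_def, if_neg h, if_pos h2]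
  have hD2 : ∀ k, k0 ≤ k → k ≤ v → D k = ((v : ℝ) - k) * ((k0 : ℝ) - u) := by
    intro k h1 h2
    by_cases h : k ≤ k0
    · have hkk : k = k0 := by omega
      rw [hD1 k (by omega) h, hkk]
      ring
    · by_cases h' : k < v
      · simp only [hD_def, if_neg (by omega : ¬ k ≤ u), if_neg h, if_pos h']
      · have hkv : k = v := by omega
        rw [hDv k (by omega), hkv]
        simp
  have hDk0pos : 0 < D k0 := by
    rw [hD1 k0 (by omega) le_rfl]
    have c1 : (u : ℝ) < k0 := by exact_mod_cast hu_lt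
    have c2 : (k0 : ℝ) < v := by exact_mod_cast hv_gt
    nlinarith
  have hDtight : ∀ k, Tp x k = Tp ρ0 k → D k = 0 := by
    intro k ht
    by_cases h1 : k ≤ u
    · exact hD0 k h1
    · by_cases h2 : v ≤ k
      · exact hDv k h2
      · exact absurd ht (ne_of_gt (hslack k (by omega) (by omega)))
  -- the direction
  set d : Fin n → ℝ := fun j => D ((j : ℕ) + 1) - D (j : ℕ) with hd_def
  have hTpd : ∀ k, k ≤ n → Tp d k = D k := by
    intro k hk
    have : ∀ m ∈ Finset.range k, (if h : m < n then d ⟨m, h⟩ else 0) = D (m + 1) - D m := by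
      intro m hm
      have hmn : m < n := by
        have := Finset.mem_range.1 hm; omega
      rw [dif_pos hmn]
    unfold Tp
    rw [Finset.sum_congr rfl this, Finset.sum_range_sub (f := D), hD0 0 (Nat.zero_le u), sub_zero]
  have hTline : ∀ (ε : ℝ) (k : ℕ), k ≤ n → Tp (x + ε • d) k = Tp x k + ε * D k := by
    intro ε k hk
    rw [Tp_add, Tp_smul, hTpd k hk]
  -- d respects the tight edges
  have hdedge : ∀ i : ℕ, ∀ h : i + 1 < n, x ⟨i, Nat.lt_of_succ_lt h⟩ = x ⟨i + 1, h⟩ →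
      d ⟨i, Nat.lt_of_succ_lt h⟩ = d ⟨i + 1, h⟩ := by
    intro i h heq
    have hxq_edge : xq (i + 1 - 1) = xq (i + 1) := by
      rw [Nat.add_sub_cancel, hxq_eq i (by omega), hxq_eq (i + 1) h]
      exact heq
    have hkne_k0 : i + 1 ≠ k0 := by
      intro hkk
      have : i = i0 := by omega
      subst this
      exact absurd heq (ne_of_lt hs1)
    have hkne_u : i + 1 ≠ u := by
      intro hkk
      rcases hu_prop (by omega) with h' | h'
      · omega
      · exact h' (by rw [← hkk]; exact hxq_edge)
    have hkne_v : i + 1 ≠ v := by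
      intro hkk
      rcases hv_prop with h' | h'
      · omega
      · exact h' (by rw [← hkk]; exact hxq_edge)
    have hsecond : D (i + 2) - D (i + 1) = D (i + 1) - D i := by
      rcases lt_trichotomy (i + 1) u with hc | hc | hc
      · rw [hD0 i (by omega), hD0 (i + 1) (by omega), hD0 (i + 2) (by omega)]
      · omega
      · rcases lt_trichotomy (i + 1) k0 with hc2 | hc2 | hc2
        · rw [hD1 i (by omega) (by omega), hD1 (i + 1) (by omega) (by omega),
            hD1 (i + 2) (by omega) (by omega)]
          push_cast
          ring
        · omega
        · rcases lt_trichotomy (i + 1) v with hc3 | hc3 | hc3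
          · rw [hD2 i (by omega) (by omega), hD2 (i + 1) (by omega) (by omega),
              hD2 (i + 2) (by omega) (by omega)]
            push_cast
            ring
          · omega
          · rw [hDv i (by omega), hDv (i + 1) (by omega), hDv (i + 2) (by omega)]
    show D (i + 1) - D i = D (i + 1 + 1) - D (i + 1)
    linarith [hsecond]
  -- eventual membership in the polytope
  have hmem : ∀ᶠ ε : ℝ in nhds (0 : ℝ), x + ε • d ∈ Pset n ρ0 := by
    have hcond1 : ∀ᶠ ε : ℝ in nhds (0 : ℝ), ∀ i ∈ Finset.range n, ∀ h : i + 1 < n,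
        (x + ε • d) ⟨i, Nat.lt_of_succ_lt h⟩ ≤ (x + ε • d) ⟨i + 1, h⟩ := by
      rw [Filter.eventually_all_finset]
      intro i _
      by_cases h : i + 1 < n
      · rcases eq_or_lt_of_le (hx.1 i h) with heq | hlt
        · refine Filter.Eventually.of_forall fun ε h' => ?_
          have hd := hdedge i h heq
          simp only [Pi.add_apply, Pi.smul_apply, smul_eq_mul]
          rw [heq, hd]
        · have hopen : IsOpen {ε : ℝ |
              x ⟨i, Nat.lt_of_succ_lt h⟩ + ε * d ⟨i, Nat.lt_of_succ_lt h⟩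
                < x ⟨i + 1, h⟩ + ε * d ⟨i + 1, h⟩} := by
            apply isOpen_lt
            · exact continuous_const.add (continuous_id.mul continuous_const)
            · exact continuous_const.add (continuous_id.mul continuous_const)
          have hmem0 : (0 : ℝ) ∈ {ε : ℝ |
              x ⟨i, Nat.lt_of_succ_lt h⟩ + ε * d ⟨i, Nat.lt_of_succ_lt h⟩
                < x ⟨i + 1, h⟩ + ε * d ⟨i + 1, h⟩} := by
            simpa using hlt
          refine Filter.Eventually.mono (hopen.mem_nhds hmem0) fun ε hε h' => ?_
          simp only [Pi.add_apply, Pi.smul_apply, smul_eq_mul]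
          exact le_of_lt hε
      · exact Filter.Eventually.of_forall fun ε h' => absurd h' h
    have hcond2 : ∀ᶠ ε : ℝ in nhds (0 : ℝ), ∀ k ∈ Finset.range (n + 1),
        Tp ρ0 k ≤ Tp (x + ε • d) k := by
      rw [Filter.eventually_all_finset]
      intro k hk
      have hkn : k ≤ n := by
        have := Finset.mem_range.1 hk; omega
      by_cases ht : Tp x k = Tp ρ0 k
      · refine Filter.Eventually.of_forall fun ε => ?_
        rw [hTline ε k hkn, hDtight k ht, mul_zero, add_zero, ht]
      · have hlt : Tp ρ0 k < Tp x k := lt_of_le_of_ne (hx.2.1 k) (Ne.symm ht)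
        have hopen : IsOpen {ε : ℝ | Tp ρ0 k < Tp x k + ε * D k} := by
          apply isOpen_lt continuous_const
          exact continuous_const.add (continuous_id.mul continuous_const)
        have hmem0 : (0 : ℝ) ∈ {ε : ℝ | Tp ρ0 k < Tp x k + ε * D k} := by simpa using hlt
        refine Filter.Eventually.mono (hopen.mem_nhds hmem0) fun ε hε => ?_
        rw [hTline ε k hkn]
        exact le_of_lt hε
    refine Filter.Eventually.mono (hcond1.and hcond2) fun ε ⟨h1, h2⟩ => ⟨?_, ?_, ?_⟩
    · intro i h
      exact h1 i (Finset.mem_range.2 (by omega)) h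
    · intro k
      by_cases hk : k ≤ n
      · exact h2 k (Finset.mem_range.2 (by omega))
      · rw [Tp_stable (x + ε • d) (by omega : n ≤ k), Tp_stable ρ0 (by omega : n ≤ k)]
        exact h2 n (Finset.mem_range.2 (by omega))
    · rw [hTline ε n le_rfl, hDv n hv_le, mul_zero, add_zero]
      exact hx.2.2
  have hneg : ∀ᶠ ε : ℝ in nhds (0 : ℝ), x + (-ε) • d ∈ Pset n ρ0 := by
    have ht : Filter.Tendsto (fun ε : ℝ => -ε) (nhds 0) (nhds 0) := by
      simpa using (continuous_neg.tendsto (0 : ℝ))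
    exact ht.eventually hmem
  obtain ⟨δ, hδpos, hδ⟩ := Metric.eventually_nhds_iff.1 (hmem.and hneg)
  have hdist : dist (δ / 2) (0 : ℝ) < δ := by
    rw [Real.dist_eq, sub_zero, abs_of_pos (by linarith)]
    linarith
  obtain ⟨hy1, hy2⟩ := hδ hdist
  -- x is a proper midpoint
  intro hext
  have hseg : x ∈ openSegment ℝ (x + (δ / 2) • d) (x + (-(δ / 2)) • d) := by
    refine ⟨1/2, 1/2, by norm_num, by norm_num, by norm_num, ?_⟩
    funext j
    simp only [Pi.add_apply, Pi.smul_apply, smul_eq_mul]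
    ring
  have heq := (hext.2 hy1 hy2 hseg)
  have hTeq : Tp (x + (δ / 2) • d) k0 = Tp x k0 := by rw [heq]
  rw [hTline (δ / 2) k0 (by omega)] at hTeq
  nlinarith [hDk0pos, hδpos, hTeq]

/-- If the `A`-pattern is tight for `SA ρ0 A`, then `SA ρ0 A` is an extreme point. -/
lemma SA_extreme_aux (hn : 1 ≤ n) {ρ0 : Fin n → ℝ} {A : Finset ℕ}
    (hP : SA ρ0 A ∈ Pset n ρ0)
    (htight : ∀ k : ℕ, 1 ≤ k → k ≤ n - 1 → (k - 1) ∉ A → Tp (SA ρ0 A) k = Tp ρ0 k)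
    (hpattern : ∀ i : ℕ, ∀ h : i + 1 < n, i ∈ A →
      SA ρ0 A ⟨i, Nat.lt_of_succ_lt h⟩ = SA ρ0 A ⟨i + 1, h⟩) :
    SA ρ0 A ∈ Set.extremePoints ℝ (Pset n ρ0) := by
  have claim : ∀ (w w' : Fin n → ℝ) (c c' : ℝ), 0 < c → 0 < c' → c + c' = 1 →
      w ∈ Pset n ρ0 → w' ∈ Pset n ρ0 → c • w + c' • w' = SA ρ0 A → w = SA ρ0 A := by
    intro w w' c c' hc hc' hcc hw hw' hsum
    refine eq_SA_of_pattern hn ?_ ?_ hw.2.2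
    · intro i h hiA
      have e1 := hw.1 i h
      have e2 := hw'.1 i h
      have g1 := congrFun hsum ⟨i, Nat.lt_of_succ_lt h⟩
      have g2 := congrFun hsum ⟨i + 1, h⟩
      simp only [Pi.add_apply, Pi.smul_apply, smul_eq_mul] at g1 g2
      have hpat := hpattern i h hiA
      have f1 : 0 ≤ c * (w ⟨i + 1, h⟩ - w ⟨i, Nat.lt_of_succ_lt h⟩) :=
        mul_nonneg hc.le (sub_nonneg.2 e1)
      have f2 : 0 ≤ c' * (w' ⟨i + 1, h⟩ - w' ⟨i, Nat.lt_of_succ_lt h⟩) :=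
        mul_nonneg hc'.le (sub_nonneg.2 e2)
      have key : c * (w ⟨i + 1, h⟩ - w ⟨i, Nat.lt_of_succ_lt h⟩)
          + c' * (w' ⟨i + 1, h⟩ - w' ⟨i, Nat.lt_of_succ_lt h⟩) = 0 := by
        linear_combination g2 - g1 - hpat
      have hz : c * (w ⟨i + 1, h⟩ - w ⟨i, Nat.lt_of_succ_lt h⟩) = 0 := by linarith
      have := (mul_eq_zero.1 hz).resolve_left (ne_of_gt hc)
      linarith
    · intro k hk1 hk2 hkA
      have e1 := hw.2.1 k
      have e2 := hw'.2.1 k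
      have hTsum : c * Tp w k + c' * Tp w' k = Tp ρ0 k := by
        rw [← htight k hk1 hk2 hkA, ← hsum, Tp_add, Tp_smul, Tp_smul]
      have f1 : 0 ≤ c * (Tp w k - Tp ρ0 k) := mul_nonneg hc.le (sub_nonneg.2 e1)
      have f2 : 0 ≤ c' * (Tp w' k - Tp ρ0 k) := mul_nonneg hc'.le (sub_nonneg.2 e2)
      have key : c * (Tp w k - Tp ρ0 k) + c' * (Tp w' k - Tp ρ0 k) = 0 := by
        linear_combination hTsum - Tp ρ0 k * hcc
      have hz : c * (Tp w k - Tp ρ0 k) = 0 := by linarith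
      have := (mul_eq_zero.1 hz).resolve_left (ne_of_gt hc)
      linarith
  refine ⟨hP, ?_⟩
  intro y hy z hz hseg
  obtain ⟨a, b, ha, hb, hab, hsum⟩ := hseg
  exact claim y z a b ha hb hab hy hz hsum

lemma extremePoints_subset_SAset (hn : 1 ≤ n) {ρ0 : Fin n → ℝ} (hρ0 : StrictMono ρ0) :
    Set.extremePoints ℝ (Pset n ρ0) ⊆
      {σ | ∃ A ⊆ Finset.range (n - 1), σ = SA ρ0 A} := by
  classical
  intro x hext
  have hxP : x ∈ Pset n ρ0 := hext.1
  set A : Finset ℕ := (Finset.range (n - 1)).filter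
    (fun i => if h : i + 1 < n then x ⟨i, Nat.lt_of_succ_lt h⟩ = x ⟨i + 1, h⟩ else True)
    with hA_def
  refine ⟨A, Finset.filter_subset _ _, ?_⟩
  refine eq_SA_of_pattern hn ?_ ?_ hxP.2.2
  · intro i h hiA
    have := (Finset.mem_filter.1 hiA).2
    rwa [dif_pos h] at this
  · intro k hk1 hk2 hkA
    by_contra hne
    have hslack2 : Tp ρ0 k < Tp x k := lt_of_le_of_ne (hxP.2.1 k) (Ne.symm hne)
    obtain ⟨i, rfl⟩ : ∃ i, k = i + 1 := ⟨k - 1, by omega⟩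
    have hin : i + 1 < n := by omega
    have hiA : i ∉ A := by simpa using hkA
    have hs1 : x ⟨i, Nat.lt_of_succ_lt hin⟩ < x ⟨i + 1, hin⟩ := by
      rcases lt_or_eq_of_le (hxP.1 i hin) with h' | h'
      · exact h'
      · exfalso
        apply hiA
        rw [hA_def]
        refine Finset.mem_filter.2 ⟨Finset.mem_range.2 (by omega), ?_⟩
        rw [dif_pos hin]
        exact h'
    exact absurd hext (not_extreme_of_slack hρ0 hxP hin hs1 hslack2)

lemma K_eq_Pset (hn : 1 ≤ n) {ρ0 : Fin n → ℝ} (hρ0 : StrictMono ρ0) :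
    closure (convexHull ℝ (attainable n (pathEdges n) ρ0)) = Pset n ρ0 := by
  set K := closure (convexHull ℝ (attainable n (pathEdges n) ρ0)) with hK
  refine le_antisymm (K_subset_Pset hρ0.monotone) ?_
  have hKM := closure_convexHull_extremePoints (Pset_compact hn ρ0) (Pset_convex ρ0)
  have hsub : Set.extremePoints ℝ (Pset n ρ0) ⊆ K := by
    intro x hx
    obtain ⟨A, hA, rfl⟩ := extremePoints_subset_SAset hn hρ0 hx
    exact (SA_mem_K hn hρ0 hA).1
  calc Pset n ρ0 = closure (convexHull ℝ (Set.extremePoints ℝ (Pset n ρ0))) := hKM.symm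
    _ ⊆ closure (convexHull ℝ K) := closure_mono (convexHull_mono hsub)
    _ = closure K := by
        rw [Convex.convexHull_eq ((convex_convexHull ℝ _).closure)]
    _ = K := closure_closure

lemma SA_strict (hn : 1 ≤ n) {ρ0 : Fin n → ℝ} (hρ0 : StrictMono ρ0) {A : Finset ℕ}
    (hA : A ⊆ Finset.range (n - 1)) {i : ℕ} (h : i + 1 < n) (hiA : i ∉ A) :
    SA ρ0 A ⟨i, Nat.lt_of_succ_lt h⟩ ≠ SA ρ0 A ⟨i + 1, h⟩ := by
  intro heq
  obtain ⟨hK, htight, hpat⟩ := SA_mem_K hn hρ0 hA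
  have hP : SA ρ0 A ∈ Pset n ρ0 := K_subset_Pset hρ0.monotone hK
  have ht : Tp (SA ρ0 A) (i + 1) = Tp ρ0 (i + 1) :=
    htight (i + 1) (by omega) (by omega) (by simpa using hiA)
  exact tight_not_both hρ0 hP h heq ht

lemma SA_injOn (hn : 1 ≤ n) {ρ0 : Fin n → ℝ} (hρ0 : StrictMono ρ0) :
    Set.InjOn (SA ρ0) {A : Finset ℕ | A ⊆ Finset.range (n - 1)} := by
  intro A hA B hB hAB
  ext i
  by_cases hi : i ∈ Finset.range (n - 1)
  · have hin : i + 1 < n := by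
      have := Finset.mem_range.1 hi; omega
    constructor
    · intro hiA
      by_contra hiB
      exact SA_strict hn hρ0 hB hin hiB
        (by rw [← hAB]; exact (SA_mem_K hn hρ0 hA).2.2 i hin hiA)
    · intro hiB
      by_contra hiA
      exact SA_strict hn hρ0 hA hin hiA
        (by rw [hAB]; exact (SA_mem_K hn hρ0 hB).2.2 i hin hiB)
  · constructor
    · intro h; exact absurd (hA h) hi
    · intro h; exact absurd (hB h) hi

lemma SAset_ncard (hn : 1 ≤ n) {ρ0 : Fin n → ℝ} (hρ0 : StrictMono ρ0) :
    {σ | ∃ A ⊆ Finset.range (n - 1), σ = SA ρ0 A}.ncard = 2 ^ (n - 1) := by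
  have hset : {σ | ∃ A ⊆ Finset.range (n - 1), σ = SA ρ0 A}
      = SA ρ0 '' ((Finset.range (n - 1)).powerset : Finset (Finset ℕ)) := by
    ext σ
    simp only [Set.mem_setOf_eq, Set.mem_image, Finset.coe_powerset,
      Finset.mem_coe, Finset.mem_powerset]
    constructor
    · rintro ⟨A, hA, rfl⟩; exact ⟨A, hA, rfl⟩
    · rintro ⟨A, hA, rfl⟩; exact ⟨A, hA, rfl⟩
  rw [hset, Set.ncard_image_of_injOn, Set.ncard_coe_finset, Finset.card_powerset,
    Finset.card_range]
  intro A hA B hB hAB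
  refine SA_injOn hn hρ0 ?_ ?_ hAB
  · exact Finset.mem_powerset.1 (Finset.mem_coe.1 hA)
  · exact Finset.mem_powerset.1 (Finset.mem_coe.1 hB)


end DP

/-- For strictly increasing `ρ0`, the map `A ↦ S_A` is injective on subsets of
`{1, …, n-1}`, the extreme points of the diffusion polytope of `P_n` are exactly the
points `S_A`, and there are exactly `2^(n-1)` of them. -/
theorem extremePoints_path_polytope (n : ℕ) (hn : 1 ≤ n)
    (ρ0 : Fin n → ℝ) (hρ0 : StrictMono ρ0) :
    Set.InjOn (SA ρ0) {A : Finset ℕ | A ⊆ Finset.range (n - 1)} ∧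
    Set.extremePoints ℝ (closure (convexHull ℝ (attainable n (pathEdges n) ρ0))) =
      {σ | ∃ A ⊆ Finset.range (n - 1), σ = SA ρ0 A} ∧
    {σ | ∃ A ⊆ Finset.range (n - 1), σ = SA ρ0 A}.ncard = 2 ^ (n - 1) := by
  refine ⟨DP.SA_injOn hn hρ0, ?_, DP.SAset_ncard hn hρ0⟩
  rw [DP.K_eq_Pset hn hρ0]
  apply Set.Subset.antisymm
  · exact DP.extremePoints_subset_SAset hn hρ0
  · rintro σ ⟨A, hA, rfl⟩
    obtain ⟨hK, htight, hpat⟩ := DP.SA_mem_K hn hρ0 hA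
    exact DP.SA_extreme_aux hn (DP.K_subset_Pset hρ0.monotone hK) htight hpat
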